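/- Let d ≥ 1 and λ > 0, and let Z = (Z_1, …, Z_d) be a measurable random vector with Z_l ≥ 0 almost surely, such that for every t ∈ [0,∞)^d one has P(∀ l, Z_l > t_l) ≤ exp(−λ · max_{l} t_l). Then E[∏_{l=1}^d Z_l] ≤ d! / λ^d, where the expectation is interpreted in [0,∞]. -/

import Mathlib

open MeasureTheory Real Set ENNReal

lemma aux_exp_tail {lam : ℝ} (hlam : 0 < lam) (m : ℝ) :
    ∫⁻ s in Set.Ioi m, ENNReal.ofReal (lam * Real.exp (-lam * s))
      = ENNReal.ofReal (Real.exp (-lam * m)) := by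
  have hint : IntegrableOn (fun s => lam * Real.exp (-lam * s)) (Set.Ioi m) := by
    have := (exp_neg_integrableOn_Ioi m hlam).const_mul lam
    simpa [neg_mul, IntegrableOn] using this
  rw [← ofReal_integral_eq_lintegral_ofReal hint
      (Filter.Eventually.of_forall fun s => by positivity)]
  congr 1
  rw [MeasureTheory.integral_const_mul]
  have h1 : ∫ x in Ioi m, Real.exp (-lam * x) = lam⁻¹ * Real.exp (-(lam * m)) := by
    have := integral_comp_mul_left_Ioi (fun y => Real.exp (-y)) m hlam
    simp only [smul_eq_mul] at this
    rw [show (fun x => Real.exp (-lam * x)) = fun x => Real.exp (-(lam * x)) by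
        funext x; ring_nf]
    rw [this, integral_exp_neg_Ioi]
  rw [h1]
  field_simp [neg_mul]

lemma aux_gamma {lam : ℝ} (hlam : 0 < lam) (d : ℕ) :
    ∫ s in Set.Ioi (0:ℝ), lam * Real.exp (-lam * s) * s ^ d
      = (Nat.factorial d : ℝ) / lam ^ d := by
  have h0 : ∀ s ∈ Ioi (0:ℝ), lam * Real.exp (-lam * s) * s ^ d
      = lam * (s ^ ((d:ℝ) + 1 - 1) * Real.exp (-(lam * s))) := by
    intro s hs
    rw [add_sub_cancel_right, Real.rpow_natCast]
    ring_nf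
  rw [setIntegral_congr_fun measurableSet_Ioi h0, integral_const_mul,
    Real.integral_rpow_mul_exp_neg_mul_Ioi (by positivity) hlam]
  have h2 : (1/lam : ℝ) ^ ((d:ℝ) + 1) = (1/lam) ^ (d+1) := by
    rw [show ((d:ℝ) + 1) = ((d + 1 : ℕ) : ℝ) by push_cast; ring, Real.rpow_natCast]
  rw [h2, Real.Gamma_nat_eq_factorial]
  field_simp [pow_succ]
  rw [one_div_pow, pow_succ]; field_simp

theorem stmt_12 {Ω : Type*} [MeasurableSpace Ω] (P : Measure Ω) [IsProbabilityMeasure P]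
    (d : ℕ) (hd : 1 ≤ d) (lam : ℝ) (hlam : 0 < lam) (Z : Ω → Fin d → ℝ)
    (hZmeas : Measurable Z)
    (hZnn : ∀ l, ∀ᵐ ω ∂P, 0 ≤ Z ω l)
    (htail : ∀ t : Fin d → ℝ, (∀ l, 0 ≤ t l) →
      P {ω | ∀ l, t l < Z ω l}
        ≤ ENNReal.ofReal
            (Real.exp (-lam * Finset.univ.sup' ⟨⟨0, hd⟩, Finset.mem_univ _⟩ t))) :
    ∫⁻ ω, ∏ l, ENNReal.ofReal (Z ω l) ∂P
      ≤ ENNReal.ofReal ((Nat.factorial d : ℝ) / lam ^ d) := by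
  classical
  have hne : (Finset.univ : Finset (Fin d)).Nonempty := ⟨⟨0, hd⟩, Finset.mem_univ _⟩
  set ν : Measure (Fin d → ℝ) := Measure.pi fun _ => volume with hν
  set A : Set (Ω × (Fin d → ℝ)) := {p | ∀ l, 0 < p.2 l ∧ p.2 l < Z p.1 l} with hA
  have hAmeas : MeasurableSet A := by
    have hAeq : A = ⋂ l, ({p : Ω × (Fin d → ℝ) | 0 < p.2 l} ∩ {p | p.2 l < Z p.1 l}) := by
      ext p; simp [hA]
    rw [hAeq]
    exact MeasurableSet.iInter fun l =>
      (measurableSet_lt measurable_const (measurable_snd.eval)).inter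
        (measurableSet_lt (measurable_snd.eval) ((hZmeas.comp measurable_fst).eval))
  -- Step 1: product = ν-measure of a section of A
  have step1 : ∀ ω, ∏ l, ENNReal.ofReal (Z ω l)
      = ∫⁻ t, A.indicator (fun _ => (1:ℝ≥0∞)) (ω, t) ∂ν := by
    intro ω
    have hsec : MeasurableSet {t : Fin d → ℝ | (ω, t) ∈ A} := measurable_prodMk_left hAmeas
    have heq : (fun t : Fin d → ℝ => A.indicator (fun _ => (1:ℝ≥0∞)) (ω, t))
        = Set.indicator {t | (ω, t) ∈ A} (fun _ => (1:ℝ≥0∞)) := by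
      ext t; by_cases h : (ω, t) ∈ A <;> simp [Set.indicator, h]
    have h2 : ∫⁻ t, A.indicator (fun _ => (1:ℝ≥0∞)) (ω, t) ∂ν = ν {t | (ω, t) ∈ A} := by
      rw [heq]; exact lintegral_indicator_one hsec
    rw [h2]
    have hset : {t : Fin d → ℝ | (ω, t) ∈ A} = Set.univ.pi (fun l => Set.Ioo 0 (Z ω l)) := by
      ext t; simp [hA]
    rw [hset, hν, Measure.pi_pi]
    simp [Real.volume_Ioo]
  rw [lintegral_congr step1]
  -- Step 2: swap
  have hind : Measurable (A.indicator (fun _ => (1:ℝ≥0∞))) := measurable_const.indicator hAmeas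
  rw [lintegral_lintegral_swap (f := fun ω t => A.indicator (fun _ => (1:ℝ≥0∞)) (ω, t)) hind.aemeasurable]
  -- Step 3: bound inner probability
  set T : Set (Fin d → ℝ) := {t | ∀ l, 0 ≤ t l} with hT
  have hTmeas : MeasurableSet T := by
    have : T = ⋂ l, {t : Fin d → ℝ | 0 ≤ t l} := by ext t; simp [hT]
    rw [this]
    exact MeasurableSet.iInter fun l =>
      measurableSet_le measurable_const (measurable_pi_apply l)
  have bound : ∀ t : Fin d → ℝ,
      ∫⁻ ω, A.indicator (fun _ => (1:ℝ≥0∞)) (ω, t) ∂P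
        ≤ T.indicator (fun t => ENNReal.ofReal
            (Real.exp (-lam * Finset.univ.sup' hne t))) t := by
    intro t
    have hsec : MeasurableSet {ω | (ω, t) ∈ A} := measurable_prodMk_right hAmeas
    have heq : (fun ω => A.indicator (fun _ => (1:ℝ≥0∞)) (ω, t))
        = Set.indicator {ω | (ω, t) ∈ A} (fun _ => (1:ℝ≥0∞)) := by
      ext ω; by_cases h : (ω, t) ∈ A <;> simp [Set.indicator, h]
    have h2 : ∫⁻ ω, A.indicator (fun _ => (1:ℝ≥0∞)) (ω, t) ∂P = P {ω | (ω, t) ∈ A} := by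
      rw [heq]; exact lintegral_indicator_one hsec
    rw [h2]
    by_cases ht : t ∈ T
    · rw [Set.indicator_of_mem ht]
      refine le_trans (measure_mono ?_) (htail t ht)
      intro ω hω l
      exact (hω l).2
    · rw [Set.indicator_of_notMem ht]
      have : {ω | (ω, t) ∈ A} = ∅ := by
        ext ω
        simp only [Set.mem_setOf_eq, Set.mem_empty_iff_false, iff_false]
        intro h
        exact ht fun l => (h l).1.le
      rw [this, measure_empty]
  refine le_trans (lintegral_mono bound) ?_
  rw [lintegral_indicator hTmeas _]
  -- Step 4: exponential as a tail integral
  have step4 : ∀ t : Fin d → ℝ,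
      ENNReal.ofReal (Real.exp (-lam * Finset.univ.sup' hne t))
        = ∫⁻ s, Set.indicator {p : (Fin d → ℝ) × ℝ | ∀ l, p.1 l < p.2}
            (fun p => ENNReal.ofReal (lam * Real.exp (-lam * p.2))) (t, s) := by
    intro t
    rw [← aux_exp_tail hlam (Finset.univ.sup' hne t),
      ← lintegral_indicator measurableSet_Ioi _]
    congr 1
    ext s
    have hmem : s ∈ Set.Ioi (Finset.univ.sup' hne t) ↔
        (t, s) ∈ {p : (Fin d → ℝ) × ℝ | ∀ l, p.1 l < p.2} := by
      simp [Set.mem_Ioi, Finset.sup'_lt_iff]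
    simp only [Set.indicator_apply]
    by_cases h : s ∈ Set.Ioi (Finset.univ.sup' hne t)
    · rw [if_pos h, if_pos (hmem.mp h)]
    · rw [if_neg h, if_neg (fun hc => h (hmem.mpr hc))]
  rw [setLIntegral_congr_fun hTmeas (fun t _ => step4 t)]
  -- Step 5: swap again
  set B : Set ((Fin d → ℝ) × ℝ) := {p | ∀ l, p.1 l < p.2} with hB
  have hBmeas : MeasurableSet B := by
    have : B = ⋂ l, {p : (Fin d → ℝ) × ℝ | p.1 l < p.2} := by ext p; simp [hB]
    rw [this]
    exact MeasurableSet.iInter fun l =>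
      measurableSet_lt (measurable_fst.eval) measurable_snd
  have hHmeas : Measurable (B.indicator
      (fun p : (Fin d → ℝ) × ℝ => ENNReal.ofReal (lam * Real.exp (-lam * p.2)))) := by
    apply Measurable.indicator _ hBmeas
    exact ENNReal.measurable_ofReal.comp
      (measurable_const.mul (Real.measurable_exp.comp (measurable_const.mul measurable_snd)))
  rw [lintegral_lintegral_swap (f := fun t s => B.indicator (fun p : (Fin d → ℝ) × ℝ => ENNReal.ofReal (lam * Real.exp (-lam * p.2))) (t, s)) hHmeas.aemeasurable]
  -- Step 6: inner integral over t
  have step6 : ∀ s : ℝ,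
      ∫⁻ t, B.indicator (fun p : (Fin d → ℝ) × ℝ =>
          ENNReal.ofReal (lam * Real.exp (-lam * p.2))) (t, s) ∂(ν.restrict T)
        = ENNReal.ofReal (lam * Real.exp (-lam * s)) * ENNReal.ofReal s ^ d := by
    intro s
    have hCmeas : MeasurableSet {t : Fin d → ℝ | ∀ l, t l < s} := by
      have : {t : Fin d → ℝ | ∀ l, t l < s} = ⋂ l, {t : Fin d → ℝ | t l < s} := by
        ext t; simp
      rw [this]
      exact MeasurableSet.iInter fun l =>
        measurableSet_lt (measurable_pi_apply l) measurable_const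
    have heq : (fun t : Fin d → ℝ => B.indicator (fun p : (Fin d → ℝ) × ℝ =>
          ENNReal.ofReal (lam * Real.exp (-lam * p.2))) (t, s))
        = Set.indicator {t : Fin d → ℝ | ∀ l, t l < s}
            (fun _ => ENNReal.ofReal (lam * Real.exp (-lam * s))) := by
      ext t
      by_cases h : (t, s) ∈ B
      · rw [Set.indicator_of_mem h, Set.indicator_of_mem (show t ∈ {t : Fin d → ℝ | ∀ l, t l < s} from h)]
      · rw [Set.indicator_of_notMem h, Set.indicator_of_notMem (show t ∉ {t : Fin d → ℝ | ∀ l, t l < s} from h)]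
    rw [heq, lintegral_indicator hCmeas _]
    simp only [lintegral_const, Measure.restrict_restrict hCmeas, Measure.restrict_apply
      MeasurableSet.univ, Set.univ_inter]
    have hset : {t : Fin d → ℝ | ∀ l, t l < s} ∩ T
        = Set.univ.pi (fun _ : Fin d => Set.Ico 0 s) := by
      ext t
      simp only [Set.mem_inter_iff, Set.mem_setOf_eq, hT, Set.mem_univ_pi, Set.mem_Ico]
      constructor
      · rintro ⟨h1, h2⟩ l; exact ⟨h2 l, h1 l⟩
      · intro h; exact ⟨fun l => (h l).2, fun l => (h l).1⟩
    rw [hset, hν, Measure.pi_pi]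
    simp [Real.volume_Ico]
  rw [lintegral_congr step6]
  -- Step 7: final computation
  have step7 : (fun s : ℝ => ENNReal.ofReal (lam * Real.exp (-lam * s)) * ENNReal.ofReal s ^ d)
      = Set.indicator (Set.Ioi 0)
          (fun s => ENNReal.ofReal (lam * Real.exp (-lam * s) * s ^ d)) := by
    ext s
    by_cases hs : (0:ℝ) < s
    · rw [Set.indicator_of_mem (show s ∈ Set.Ioi (0:ℝ) from hs), ← ENNReal.ofReal_pow hs.le,
        ← ENNReal.ofReal_mul (by positivity)]
    · rw [Set.indicator_of_notMem (show s ∉ Set.Ioi (0:ℝ) from hs)]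
      push_neg at hs
      rw [ENNReal.ofReal_eq_zero.mpr hs, zero_pow (by omega), mul_zero]
  rw [step7, lintegral_indicator measurableSet_Ioi _]
  have hint : IntegrableOn (fun s : ℝ => lam * Real.exp (-lam * s) * s ^ d) (Set.Ioi 0) := by
    have H := (integrableOn_rpow_mul_exp_neg_mul_rpow
      (by exact_mod_cast neg_one_lt_zero.trans_le (Nat.cast_nonneg d) : (-1:ℝ) < (d:ℝ))
      (zero_lt_one' ℝ) hlam).const_mul lam
    have H' : IntegrableOn (fun x : ℝ => lam * (x ^ (d:ℝ) * Real.exp (-lam * x ^ (1:ℝ))))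
        (Set.Ioi 0) := H
    refine H'.congr_fun (fun x hx => ?_) measurableSet_Ioi
    beta_reduce
    rw [Real.rpow_one, Real.rpow_natCast]
    ring
  rw [← ofReal_integral_eq_lintegral_ofReal hint
      ((ae_restrict_iff' measurableSet_Ioi).mpr
        (Filter.Eventually.of_forall fun s hs => by
          have h0 : (0:ℝ) < s := hs
          positivity))]
  rw [aux_gamma hlam d]
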